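/- Let Hyp be magic hypotheses with instantiation relation inst, specialisation relation specH on Hyp and specI on instantiated hypotheses, and entailment entails on instantiated hypotheses. Assume: (a) specI I1 I2 implies every example entailed by I2 is entailed by I1; (b) if specH H1 H2 and inst H2 I2, then there exists I1 with inst H1 I1 and specI I1 I2. If every instantiation I1 of H1 satisfying ∃ e ∈ E⁺, entails I1 e is incomplete, and E⁺ is nonempty, then every instantiation I2 of any specialisation H2 of H1 is incomplete. -/
import Mathlib

theorem extended_specialisation_constraint {Hyp IHyp Ex : Type*}
    (inst : Hyp → IHyp → Prop) (specH : Hyp → Hyp → Prop)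
    (specI : IHyp → IHyp → Prop) (entails : IHyp → Ex → Prop)
    (ha : ∀ I1 I2, specI I1 I2 → ∀ e, entails I2 e → entails I1 e)
    (hb : ∀ H1 H2 I2, specH H1 H2 → inst H2 I2 → ∃ I1, inst H1 I1 ∧ specI I1 I2)
    (Epos : Set Ex) (hne : Epos.Nonempty) (H1 : Hyp)
    (h : ∀ I1, inst H1 I1 → (∃ e ∈ Epos, entails I1 e) → ∃ e ∈ Epos, ¬ entails I1 e) :
    ∀ H2, specH H1 H2 → ∀ I2, inst H2 I2 → ∃ e ∈ Epos, ¬ entails I2 e := by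
  intro H2 hs I2 hi
  obtain ⟨I1, hI1, hsp⟩ := hb H1 H2 I2 hs hi
  by_cases hc : ∃ e ∈ Epos, entails I2 e
  · obtain ⟨e, he, hee⟩ := hc
    obtain ⟨e', he', hne'⟩ := h I1 hI1 ⟨e, he, ha I1 I2 hsp e hee⟩
    exact ⟨e', he', fun h2 => hne' (ha I1 I2 hsp e' h2)⟩
  · push_neg at hc
    obtain ⟨e, he⟩ := hne
    exact ⟨e, he, hc e he⟩
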